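/- arXiv:1205.6897 — 2 statements merged into one kernel-verified Lean document; each statement's English description precedes it below -/
import Mathlib

section
/- Let G be a gap sequence of genus g, 0 ≤ k ≤ g−1, and let m_k and a^{(k)}_1,...,a^{(k)}_{m_k} be the associated data. Then a^{(k)}_1 > a^{(k)}_2 > ⋯ > a^{(k)}_{m_k} ≥ 1, and every a^{(k)}_i belongs to G. -/
open MvPolynomial

/-- The polynomial `p_n(t)` defined by `exp(Σ_{n≥1} t_n k^n) = Σ_{n≥0} p_n(t) k^n`,
as a polynomial in the variables `t_1, t_2, ...` (variable `X n` stands for `t_n`). -/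
noncomputable def pS (n : ℕ) : MvPolynomial ℕ ℚ :=
  ∑ m ∈ Finset.range (n + 1), (Nat.factorial m : ℚ)⁻¹ •
    ∑ c ∈ Finset.univ.filter
        (fun c : Fin m → Fin (n + 1) =>
          (∑ j, ((c j : ℕ))) = n ∧ ∀ j, 1 ≤ (c j : ℕ)),
      ∏ j, X ((c j : ℕ))

/-- `p_n` for `n : ℤ`, with `p_n = 0` for `n < 0`. -/
noncomputable def pz (n : ℤ) : MvPolynomial ℕ ℚ :=
  if 0 ≤ n then pS n.toNat else 0

/-- The Schur function `s_λ(t) = det(p_{λ_i - i + j})_{1 ≤ i,j ≤ l}` (here `0`-indexed). -/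
noncomputable def schur {l : ℕ} (lam : Fin l → ℕ) : MvPolynomial ℕ ℚ :=
  Matrix.det (Matrix.of fun a b : Fin l =>
    pz ((lam a : ℤ) - ((a : ℕ) : ℤ) + ((b : ℕ) : ℤ)))

/-- Substitution `t_n ↦ (x_1^n + ⋯ + x_k^n)/n`, i.e. `t = [x_1] + ⋯ + [x_k]`. -/
noncomputable def toPowerSums (k : ℕ) (f : MvPolynomial ℕ ℚ) : MvPolynomial (Fin k) ℚ :=
  aeval (fun n : ℕ => (n : ℚ)⁻¹ • ∑ i : Fin k, X i ^ n) f

/-- Iterated partial derivative `∂_{i_1} ⋯ ∂_{i_r}` for a list `L = [i_1, ..., i_r]`. -/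
noncomputable def derivs (L : List ℕ) (f : MvPolynomial ℕ ℚ) : MvPolynomial ℕ ℚ :=
  L.foldr (fun i g => pderiv i g) f

/-- The entries of a partition `λ` padded by zeros (`0`-indexed). -/
def pad {l : ℕ} (lam : Fin l → ℕ) (a : ℕ) : ℕ := if h : a < l then lam ⟨a, h⟩ else 0

/-- `w_i`: the `(i+1)`-st smallest element of `G` (0-indexed: `wseq G 0 = w_1`). -/
def wseq (G : Finset ℕ) (i : ℕ) : ℕ := (G.sort (· ≤ ·)).getD i 0

/-- `w_i^*`: the `(i+1)`-st smallest element of the complement of `G`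
(0-indexed: `wstar G 0 = w_1^* = 0`). -/
noncomputable def wstar (G : Finset ℕ) (i : ℕ) : ℕ := Nat.nth (fun n => n ∉ G) i

/-- `m_k = #{i : w_i^* < g - k}`, the number of non-gaps below `g - k`. -/
def gapm (G : Finset ℕ) (g k : ℕ) : ℕ :=
  ((Finset.range (g - k)).filter (fun n => n ∉ G)).card

/-- `a^{(k)}_{j+1} = w_{g-k-j} - w_{j+1}^*` (0-indexed in `j`, `0 ≤ j < m_k`). -/
noncomputable def gapa (G : Finset ℕ) (g k j : ℕ) : ℕ :=
  wseq G (g - k - j - 1) - wstar G j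

/-- The partition associated to the gap sequence `G`:
`λ = (w_g, ..., w_1) - (g-1, ..., 1, 0)`, i.e. `λ_{a+1} = w_{g-a} - (g-1-a)` (0-indexed `a`). -/
def gapPart (G : Finset ℕ) (g a : ℕ) : ℕ := wseq G (g - 1 - a) - (g - 1 - a)


lemma wseq_mem' {G : Finset ℕ} {i : ℕ} (hi : i < G.card) : wseq G i ∈ G := by
  have hl : i < (G.sort (· ≤ ·)).length := by rwa [Finset.length_sort]
  rw [wseq, List.getD_eq_getElem _ _ hl]
  exact (Finset.mem_sort _).1 (List.getElem_mem _)

lemma wseq_lt' {G : Finset ℕ} {i j : ℕ} (hij : i < j) (hj : j < G.card) :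
    wseq G i < wseq G j := by
  have hl : j < (G.sort (· ≤ ·)).length := by rwa [Finset.length_sort]
  have hl' : i < (G.sort (· ≤ ·)).length := lt_trans hij hl
  simp only [wseq]; rw [List.getD_eq_getElem _ _ hl', List.getD_eq_getElem _ _ hl]
  have := (G.sortedLT_sort).strictMono_get (a := ⟨i, hl'⟩) (b := ⟨j, hl⟩) hij
  simpa using this

lemma gap_inf (G : Finset ℕ) : (setOf fun n => n ∉ G).Infinite := by
  have h : (setOf fun n => n ∉ G) = (↑G : Set ℕ)ᶜ := by ext x; simp [setOf]
  rw [h]; exact G.finite_toSet.infinite_compl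

lemma gapm_le (G : Finset ℕ) (g k : ℕ) : gapm G g k ≤ g - k := by
  rw [gapm]
  exact le_trans (Finset.card_filter_le _ _) (le_of_eq (Finset.card_range _))

lemma gap_key {G : Finset ℕ} {g k j : ℕ} (hcard : G.card = g) (hk : k < g)
    (hj : j < gapm G g k) : wstar G j < wseq G (g - k - j - 1) := by
  have hinf : (setOf fun n => n ∉ G).Infinite := gap_inf G
  have hm : gapm G g k = Nat.count (fun n => n ∉ G) (g - k) := by
    rw [gapm, Nat.count_eq_card_filter_range]
  have hjm : j < Nat.count (fun n => n ∉ G) (g - k) := hm ▸ hj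
  have hs_lt : Nat.nth (fun n => n ∉ G) j < g - k := Nat.nth_lt_of_lt_count hjm
  set s := Nat.nth (fun n => n ∉ G) j with hs
  have hcount : Nat.count (fun n => n ∉ G) s = j := Nat.count_nth_of_infinite hinf j
  have hps : s ∉ G := Nat.nth_mem_of_infinite hinf j
  have hcount1 : Nat.count (fun n => n ∉ G) (s + 1) = j + 1 := by
    rw [Nat.count_succ, hcount, if_pos hps]
  have hsplit := Finset.card_filter_add_card_filter_not
      (s := Finset.range (s + 1)) (p := fun n => n ∉ G)
  have hgaps : ((Finset.range (s + 1)).filter (fun x => x ∈ G)).card = s - j := by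
    have h1 : ((Finset.range (s + 1)).filter (fun n => n ∉ G)).card = j + 1 := by
      rw [← Nat.count_eq_card_filter_range]; exact hcount1
    have h2 : ((Finset.range (s + 1)).filter (fun x => ¬ x ∉ G)).card
        = ((Finset.range (s + 1)).filter (fun x => x ∈ G)).card := by
      congr 1
      apply Finset.filter_congr; intro x _; simp
    rw [Finset.card_range, h1, h2] at hsplit
    omega
  by_contra hcon
  push_neg at hcon
  rw [show wstar G j = s from rfl] at hcon
  set t := g - k - j - 1 with ht
  have hjgk : j < g - k := lt_of_lt_of_le hj (gapm_le G g k)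
  have htg : t < g := by omega
  have hinj : t + 1 ≤ ((Finset.range (s + 1)).filter (fun x => x ∈ G)).card := by
    have hcc := Finset.card_le_card_of_injOn (f := fun u => wseq G u)
      (s := Finset.range (t + 1)) (t := (Finset.range (s + 1)).filter (fun x => x ∈ G))
      ?_ ?_
    · simpa using hcc
    · intro u hu
      rw [Finset.mem_coe, Finset.mem_range] at hu
      have hug : u < g := by omega
      have hmem : wseq G u ∈ G := wseq_mem' (by omega)
      have hle : wseq G u ≤ wseq G t := by
        rcases lt_or_eq_of_le (Nat.lt_succ_iff.mp hu) with h | h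
        · exact le_of_lt (wseq_lt' h (by omega))
        · rw [h]
      rw [Finset.mem_coe, Finset.mem_filter, Finset.mem_range]
      refine ⟨?_, hmem⟩
      show wseq G u < s + 1
      omega
    · intro a ha b hb hab
      rw [Finset.mem_coe, Finset.mem_range] at ha hb
      by_contra hne
      rcases Nat.lt_or_ge a b with h | h
      · exact absurd hab (ne_of_lt (wseq_lt' h (by omega)))
      · have hba : b < a := by omega
        exact absurd hab.symm (ne_of_lt (wseq_lt' hba (by omega)))
  omega

/-- For a gap sequence `G` of genus `g` and `0 ≤ k ≤ g-1`:
`a^{(k)}_1 > a^{(k)}_2 > ⋯ > a^{(k)}_{m_k} ≥ 1`, and every `a^{(k)}_i` belongs to `G`. -/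
theorem statement3 (g : ℕ) (hg : 1 ≤ g) (G : Finset ℕ)
    (hcard : G.card = g) (h0 : 0 ∉ G)
    (hadd : ∀ a b : ℕ, a ∉ G → b ∉ G → a + b ∉ G)
    (k : ℕ) (hk : k < g) :
    (∀ i j : ℕ, i < j → j < gapm G g k → gapa G g k j < gapa G g k i)
    ∧ (∀ j : ℕ, j < gapm G g k → 1 ≤ gapa G g k j)
    ∧ (∀ j : ℕ, j < gapm G g k → gapa G g k j ∈ G) := by
  
  have hinf : (setOf fun n => n ∉ G).Infinite := gap_inf G
  have hane : ∀ j, j < gapm G g k → wstar G j < wseq G (g - k - j - 1) :=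
    fun j hj => gap_key hcard hk hj
  have hmle := gapm_le G g k
  refine ⟨?_, ?_, ?_⟩
  · intro i j hij hj
    have h1 := hane j hj
    have h2 := hane i (lt_trans hij hj)
    have hjgk : j < g - k := lt_of_lt_of_le hj hmle
    have hwi : wseq G (g - k - j - 1) < wseq G (g - k - i - 1) :=
      wseq_lt' (by omega) (by omega)
    have hws : wstar G i < wstar G j := (Nat.nth_lt_nth hinf).2 hij
    unfold gapa
    omega
  · intro j hj
    have h1 := hane j hj
    unfold gapa
    omega
  · intro j hj
    have h1 := hane j hj
    have hjgk : j < g - k := lt_of_lt_of_le hj hmle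
    have hw : wseq G (g - k - j - 1) ∈ G := wseq_mem' (by omega)
    have hs : wstar G j ∉ G := Nat.nth_mem_of_infinite hinf j
    rw [gapa]
    by_contra hcon
    have h2 := hadd _ _ hcon hs
    rw [Nat.sub_add_cancel (le_of_lt h1)] at h2
    exact h2 hw
end

section
/- Let λ=(λ_1,...,λ_l) be a partition of length l and set N'_{λ,1} = λ_2+⋯+λ_l − (l−1). If n < N'_{λ,1}, then ∂_1^n s_λ(t) evaluated at t = [x_1]−[x_2] is identically zero as a polynomial in x_1, x_2. -/
open MvPolynomial

/-- Substitution `t_n ↦ (x_1^n - x_2^n)/n`, i.e. `t = [x_1] - [x_2]`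
(here `x_1 = X 0`, `x_2 = X 1`). -/
noncomputable def toDiff (f : MvPolynomial ℕ ℚ) : MvPolynomial (Fin 2) ℚ :=
  aeval (fun n : ℕ => (n : ℚ)⁻¹ • (X 0 ^ n - X 1 ^ n)) f

def SS (m n N : ℕ) : Finset (Fin m → ℕ) :=
  (Fintype.piFinset (fun _ : Fin m => Finset.range (N + 1))).filter
      (fun c : Fin m → ℕ => (∑ j, c j) = n ∧ ∀ j, 1 ≤ c j)

noncomputable def BB (m n N : ℕ) : MvPolynomial ℕ ℚ :=
  ∑ c ∈ SS m n N, ∏ j, X (c j)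

lemma SS_zero_empty {n N : ℕ} (hn : n ≠ 0) : SS 0 n N = ∅ := by
  ext c
  simp [SS, Finset.mem_filter, hn, eq_comm]

lemma SS_empty_of_lt {m n N : ℕ} (h : n < m) : SS m n N = ∅ := by
  ext c
  simp only [SS, Finset.mem_filter, Finset.notMem_empty, iff_false, not_and]
  intro _ hs
  intro hp
  have : (m : ℕ) ≤ ∑ j : Fin m, c j := by
    calc (m : ℕ) = ∑ _j : Fin m, 1 := by simp
    _ ≤ ∑ j : Fin m, c j := Finset.sum_le_sum fun j _ => hp j
  omega

lemma BB_eq_zero {m n N : ℕ} (h : n < m) : BB m n N = 0 := by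
  rw [BB, SS_empty_of_lt h, Finset.sum_empty]

lemma BB_sym {m n N : ℕ} (j j' : Fin m) :
    ∑ c ∈ SS m n N, (c j) • ∏ a, (X (c a) : MvPolynomial ℕ ℚ)
      = ∑ c ∈ SS m n N, (c j') • ∏ a, (X (c a) : MvPolynomial ℕ ℚ) := by
  refine Finset.sum_nbij' (fun c => c ∘ (Equiv.swap j j')) (fun c => c ∘ (Equiv.swap j j'))
    ?_ ?_ ?_ ?_ ?_
  · intro c hc
    simp only [SS, Finset.mem_filter, Fintype.mem_piFinset] at hc ⊢
    obtain ⟨hb, hs, hp⟩ := hc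
    exact ⟨fun a => hb _, by rw [← hs]; exact (Equiv.sum_comp (Equiv.swap j j') c), fun a => hp _⟩
  · intro c hc
    simp only [SS, Finset.mem_filter, Fintype.mem_piFinset] at hc ⊢
    obtain ⟨hb, hs, hp⟩ := hc
    exact ⟨fun a => hb _, by rw [← hs]; exact (Equiv.sum_comp (Equiv.swap j j') c), fun a => hp _⟩
  · intro c _; funext a; simp [Function.comp, Equiv.swap_apply_self]
  · intro c _; funext a; simp [Function.comp, Equiv.swap_apply_self]
  · intro c _
    have h1 : (c ∘ (Equiv.swap j j')) j' = c j := by simp [Function.comp]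
    have h2 : ∏ a, X ((c ∘ (Equiv.swap j j')) a) = ∏ a, (X (c a) : MvPolynomial ℕ ℚ) :=
      Equiv.prod_comp (Equiv.swap j j') (fun a => X (c a))
    show c j • _ = (c ∘ (Equiv.swap j j')) j' • ∏ a, X ((c ∘ (Equiv.swap j j')) a)
    rw [h1, h2]

lemma BB_cons {m n N : ℕ} (hnN : n ≤ N) :
    ∑ c ∈ SS (m+1) n N, (c 0) • ∏ a, (X (c a) : MvPolynomial ℕ ℚ)
      = ∑ k ∈ Finset.Icc 1 n, k • ((X k : MvPolynomial ℕ ℚ) * BB m (n - k) N) := by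
  classical
  have step1 : ∑ c ∈ SS (m+1) n N, (c 0) • ∏ a, (X (c a) : MvPolynomial ℕ ℚ)
      = ∑ p ∈ ((Finset.range (N+1)) ×ˢ (Fintype.piFinset fun _ : Fin m => Finset.range (N + 1))).filter
          (fun p : ℕ × (Fin m → ℕ) => (1 ≤ p.1 ∧ p.1 + ∑ j, p.2 j = n) ∧ ∀ j, 1 ≤ p.2 j),
          p.1 • ((X p.1 : MvPolynomial ℕ ℚ) * ∏ j, X (p.2 j)) := by
    refine Finset.sum_nbij' (fun c => ((c 0 : ℕ), fun a : Fin m => c a.succ))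
      (fun p => Fin.cons p.1 p.2) ?_ ?_ ?_ ?_ ?_
    · intro c hc
      simp only [SS, Finset.mem_filter, Fintype.mem_piFinset, Finset.mem_product,
        Finset.mem_range] at hc ⊢
      obtain ⟨hb, hs, hp⟩ := hc
      rw [Fin.sum_univ_succ] at hs
      exact ⟨⟨hb 0, fun a => hb a.succ⟩, ⟨hp 0, hs⟩, fun a => hp a.succ⟩
    · intro p hp
      simp only [SS, Finset.mem_filter, Fintype.mem_piFinset, Finset.mem_product,
        Finset.mem_range] at hp ⊢
      obtain ⟨⟨hb0, hb⟩, ⟨h1, hs⟩, hpp⟩ := hp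
      refine ⟨fun a => ?_, ?_, fun a => ?_⟩
      · cases a using Fin.cases with
        | zero => simpa using hb0
        | succ i => simpa using hb i
      · rw [Fin.sum_univ_succ]; simpa using hs
      · cases a using Fin.cases with
        | zero => simpa using h1
        | succ i => simpa using hpp i
    · intro c _
      exact (Fin.cons_self_tail c)
    · intro p _
      simp
    · intro c _
      rw [Fin.prod_univ_succ]
  rw [step1, Finset.sum_filter, Finset.sum_product]
  have step2 : ∀ k ∈ Finset.Icc 1 n,
      (k • ((X k : MvPolynomial ℕ ℚ) * BB m (n - k) N))
      = ∑ c ∈ (Fintype.piFinset fun _ : Fin m => Finset.range (N + 1)),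
          (if (1 ≤ k ∧ k + ∑ j, c j = n) ∧ ∀ j, 1 ≤ c j
            then k • ((X k : MvPolynomial ℕ ℚ) * ∏ j, X (c j)) else 0) := by
    intro k hk
    simp only [Finset.mem_Icc] at hk
    rw [BB, SS, Finset.mul_sum, Finset.smul_sum, ← Finset.sum_filter]
    apply Finset.sum_congr _ (fun _ _ => rfl)
    ext c
    simp only [Finset.mem_filter, Fintype.mem_piFinset]
    constructor
    · rintro ⟨hb, hs, hp⟩
      exact ⟨hb, ⟨hk.1, by omega⟩, hp⟩
    · rintro ⟨hb, ⟨h1, hs⟩, hp⟩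
      exact ⟨hb, by omega, hp⟩
  rw [Finset.sum_congr rfl step2]
  symm
  apply Finset.sum_subset
  · intro k hk
    simp only [Finset.mem_Icc] at hk
    simp only [Finset.mem_range]
    omega
  · intro k _ hk
    simp only [Finset.mem_Icc, not_and, not_le] at hk
    apply Finset.sum_eq_zero
    intro c _
    rw [if_neg]
    rintro ⟨⟨h1, hs⟩, -⟩
    omega


lemma BB_irrel {m n N N' : ℕ} (h : n ≤ N) (h' : n ≤ N') : BB m n N = BB m n N' := by
  unfold BB SS
  apply Finset.sum_congr _ (fun _ _ => rfl)
  ext c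
  simp only [Finset.mem_filter, Fintype.mem_piFinset, Finset.mem_range]
  constructor
  · rintro ⟨hc, hs, hp⟩
    refine ⟨fun a => ?_, hs, hp⟩
    have : c a ≤ n := (Finset.single_le_sum (f := fun j => c j)
      (fun _ _ => Nat.zero_le _) (Finset.mem_univ a)).trans_eq hs
    omega
  · rintro ⟨hc, hs, hp⟩
    refine ⟨fun a => ?_, hs, hp⟩
    have : c a ≤ n := (Finset.single_le_sum (f := fun j => c j)
      (fun _ _ => Nat.zero_le _) (Finset.mem_univ a)).trans_eq hs
    omega

lemma pS_eq (n : ℕ) : pS n = ∑ m ∈ Finset.range (n + 1), (Nat.factorial m : ℚ)⁻¹ • BB m n n := by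
  unfold pS BB SS
  refine Finset.sum_congr rfl fun m _ => ?_
  congr 1
  refine Finset.sum_nbij' (fun c => fun j => (c j : ℕ))
    (fun c => fun j => (⟨min (c j) n, by omega⟩ : Fin (n+1))) ?_ ?_ ?_ ?_ ?_
  · intro c hc
    simp only [Finset.mem_filter, Finset.mem_univ, true_and] at hc
    simp only [Finset.mem_filter, Fintype.mem_piFinset, Finset.mem_range]
    exact ⟨fun a => (c a).isLt, hc.1, hc.2⟩
  · intro c hc
    simp only [Finset.mem_filter, Fintype.mem_piFinset, Finset.mem_range] at hc
    obtain ⟨hb, hs, hp⟩ := hc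
    have hle : ∀ a, c a ≤ n := fun a =>
      (Finset.single_le_sum (f := fun j => c j) (fun _ _ => Nat.zero_le _) (Finset.mem_univ a)).trans_eq hs
    simp only [Finset.mem_filter, Finset.mem_univ, true_and]
    constructor
    · exact (Finset.sum_congr rfl fun a (_ : a ∈ Finset.univ) => Nat.min_eq_left (hle a)).trans hs
    · intro a; show 1 ≤ min (c a) n; have := hp a; have := hle a; omega
  · intro c hc
    simp only [Finset.mem_filter, Finset.mem_univ, true_and] at hc
    have hle : ∀ a, (c a : ℕ) ≤ n := fun a =>
      (Finset.single_le_sum (f := fun j => (c j : ℕ)) (fun _ _ => Nat.zero_le _) (Finset.mem_univ a)).trans_eq hc.1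
    funext a
    exact Fin.ext (by simp [Nat.min_eq_left (hle a)])
  · intro c hc
    simp only [Finset.mem_filter, Fintype.mem_piFinset, Finset.mem_range] at hc
    have hle : ∀ a, c a ≤ n := fun a =>
      (Finset.single_le_sum (f := fun j => c j) (fun _ _ => Nat.zero_le _) (Finset.mem_univ a)).trans_eq hc.2.1
    funext a
    simp [Nat.min_eq_left (hle a)]
  · intro c _; rfl

lemma pS_zero : pS 0 = 1 := by
  unfold pS
  rw [Finset.sum_range_one]
  rw [show (Finset.univ.filter (fun c : Fin 0 → Fin 1 => (∑ j, ((c j : ℕ))) = 0 ∧ ∀ j, 1 ≤ (c j : ℕ))) = Finset.univ from by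
    ext c; simp [Finset.sum_empty]]
  simp

set_option maxHeartbeats 1000000 in
theorem newton (n : ℕ) :
    (n • pS n : MvPolynomial ℕ ℚ) = ∑ k ∈ Finset.Icc 1 n, k • (X k * pS (n - k)) := by
  rcases Nat.eq_zero_or_pos n with hn | hn
  · subst hn; simp
  have pSeq : ∀ s, pS s = ∑ m ∈ Finset.range (s + 1), (Nat.factorial m : ℚ)⁻¹ • BB m s s :=
    pS_eq
  -- key : n • BB (m+1) n n = (m+1) • (weighted sum)
  have key : ∀ m' : ℕ, n • BB (m'+1) n n
      = (m'+1) • ∑ c ∈ SS (m'+1) n n, (c 0) • ∏ a, (X (c a) : MvPolynomial ℕ ℚ) := by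
    intro m'
    rw [BB, Finset.smul_sum]
    have h1 : ∀ c ∈ SS (m'+1) n n, n • ∏ a, (X (c a) : MvPolynomial ℕ ℚ)
        = ∑ j : Fin (m'+1), (c j) • ∏ a, (X (c a) : MvPolynomial ℕ ℚ) := by
      intro c hc
      simp only [SS, Finset.mem_filter] at hc
      rw [← Finset.sum_smul, hc.2.1]
    rw [Finset.sum_congr rfl h1, Finset.sum_comm]
    rw [Finset.sum_congr rfl (fun j (_ : j ∈ Finset.univ) => BB_sym j 0)]
    rw [Finset.sum_const, Finset.card_univ, Fintype.card_fin]
  calc n • pS n = ∑ m ∈ Finset.range (n + 1), (Nat.factorial m : ℚ)⁻¹ • (n • BB m n n) := by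
        rw [pSeq n, Finset.smul_sum]
        refine Finset.sum_congr rfl fun m _ => ?_
        exact smul_comm n ((Nat.factorial m : ℚ)⁻¹) (BB m n n)
    _ = ∑ m' ∈ Finset.range n, (Nat.factorial (m'+1) : ℚ)⁻¹ • (n • BB (m'+1) n n)
          + (Nat.factorial 0 : ℚ)⁻¹ • (n • BB 0 n n) := Finset.sum_range_succ' _ n
    _ = ∑ m' ∈ Finset.range n, (Nat.factorial m' : ℚ)⁻¹ •
          ∑ k ∈ Finset.Icc 1 n, k • ((X k : MvPolynomial ℕ ℚ) * BB m' (n - k) n) := by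
        rw [BB, SS_zero_empty hn.ne', Finset.sum_empty, smul_zero, smul_zero, add_zero]
        refine Finset.sum_congr rfl fun m' _ => ?_
        rw [key m', ← BB_cons le_rfl]
        rw [← Nat.cast_smul_eq_nsmul ℚ (m'+1), smul_smul]
        congr 1
        rw [Nat.factorial_succ]
        have h1 : ((m' : ℚ) + 1) ≠ 0 := by positivity
        have h2 : ((Nat.factorial m' : ℚ)) ≠ 0 := by
          exact_mod_cast Nat.cast_ne_zero.mpr (Nat.factorial_ne_zero m')
        push_cast
        field_simp
    _ = ∑ k ∈ Finset.Icc 1 n, k • ((X k : MvPolynomial ℕ ℚ)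
          * ∑ m' ∈ Finset.range n, (Nat.factorial m' : ℚ)⁻¹ • BB m' (n - k) n) := by
        rw [Finset.sum_congr rfl (fun m' (_ : m' ∈ Finset.range n) => Finset.smul_sum
          (r := (Nat.factorial m' : ℚ)⁻¹)
          (f := fun k => k • ((X k : MvPolynomial ℕ ℚ) * BB m' (n - k) n)))]
        rw [Finset.sum_comm]
        refine Finset.sum_congr rfl fun k _ => ?_
        rw [Finset.mul_sum, Finset.smul_sum]
        refine Finset.sum_congr rfl fun m' _ => ?_
        rw [mul_smul_comm, smul_comm]
    _ = ∑ k ∈ Finset.Icc 1 n, k • ((X k : MvPolynomial ℕ ℚ) * pS (n - k)) := by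
        refine Finset.sum_congr rfl fun k hk => ?_
        simp only [Finset.mem_Icc] at hk
        congr 1
        congr 1
        rw [pSeq (n - k)]
        simp only [show ∀ m, BB m (n-k) (n-k) = BB m (n-k) n from
          fun m => BB_irrel le_rfl (Nat.sub_le n k)]
        symm
        apply Finset.sum_subset
        · intro m hm
          simp only [Finset.mem_range] at hm ⊢
          omega
        · intro m hm hm'
          simp only [Finset.mem_range] at hm hm'
          rw [BB_eq_zero (by omega), smul_zero]

lemma nsmul_cancel {M : Type*} [AddCommMonoid M] [Module ℚ M] {m : ℕ} (hm : m ≠ 0)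
    {x y : M} (h : m • x = m • y) : x = y := by
  rw [← Nat.cast_smul_eq_nsmul ℚ, ← Nat.cast_smul_eq_nsmul ℚ] at h
  have hne : (m : ℚ) ≠ 0 := Nat.cast_ne_zero.mpr hm
  have := congrArg (fun z => (m : ℚ)⁻¹ • z) h
  simpa [smul_smul, inv_mul_cancel₀ hne] using this

lemma pderiv_pS_succ : ∀ n : ℕ, pderiv 1 (pS (n+1)) = pS n := by
  intro n
  induction n using Nat.strong_induction_on with
  | _ n ih =>
  have hD := congrArg (fun f => pderiv (R := ℚ) 1 f) (newton (n+1))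
  simp only [map_nsmul, map_sum] at hD
  have hterm : ∀ k ∈ Finset.Icc 1 (n+1),
      k • (pderiv (R := ℚ) 1 ((X k : MvPolynomial ℕ ℚ) * pS (n+1-k)))
        = k • ((X k : MvPolynomial ℕ ℚ) * pderiv 1 (pS (n+1-k)))
          + k • (pS (n+1-k) * pderiv 1 (X k)) := by
    intro k _
    rw [pderiv_mul, smul_add, add_comm]
    congr 1
    rw [mul_comm]
  rw [Finset.sum_congr rfl hterm, Finset.sum_add_distrib] at hD
  have hA : ∑ k ∈ Finset.Icc 1 (n+1), k • ((X k : MvPolynomial ℕ ℚ) * pderiv 1 (pS (n+1-k)))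
      = n • pS n := by
    rw [Finset.sum_Icc_succ_top (by omega : 1 ≤ n+1)]
    have h0 : pderiv (R := ℚ) 1 (pS (n+1-(n+1))) = 0 := by
      simp only [Nat.sub_self, pS_zero]
      exact Derivation.map_one_eq_zero _
    rw [h0, mul_zero, smul_zero, add_zero]
    rw [newton n]
    refine Finset.sum_congr rfl fun k hk => ?_
    simp only [Finset.mem_Icc] at hk
    have : n + 1 - k = (n - k) + 1 := by omega
    rw [this, ih (n-k) (by omega)]
  have hB : ∑ k ∈ Finset.Icc 1 (n+1), k • (pS (n+1-k) * pderiv (R := ℚ) 1 (X k))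
      = pS n := by
    rw [Finset.sum_eq_single 1]
    · simp [pderiv_X_self]
    · intro k _ hk1
      rw [pderiv_X_of_ne (by omega), mul_zero, smul_zero]
    · intro h; exact absurd (Finset.mem_Icc.mpr ⟨le_refl 1, by omega⟩) h
  rw [hA, hB, ← succ_nsmul (pS n) n] at hD
  exact nsmul_cancel (Nat.succ_ne_zero n) hD

lemma toDiff_one : toDiff 1 = 1 := map_one (aeval _)

lemma toDiff_pS_succ : ∀ n : ℕ, toDiff (pS (n+1)) = (X 0 - X 1) * X 0 ^ n := by
  intro n
  induction n using Nat.strong_induction_on with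
  | _ n ih =>
  have hD := congrArg toDiff (newton (n+1))
  unfold toDiff at hD
  simp only [map_nsmul, map_sum, map_mul, aeval_X] at hD
  have hterm : ∀ k ∈ Finset.Icc 1 (n+1),
      k • (((k:ℚ)⁻¹ • ((X 0 : MvPolynomial (Fin 2) ℚ) ^ k - X 1 ^ k))
          * aeval (fun n : ℕ => (n : ℚ)⁻¹ • ((X 0 : MvPolynomial (Fin 2) ℚ) ^ n - X 1 ^ n)) (pS (n+1-k)))
        = ((X 0 : MvPolynomial (Fin 2) ℚ) ^ k - X 1 ^ k) * toDiff (pS (n+1-k)) := by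
    intro k hk
    simp only [Finset.mem_Icc] at hk
    rw [smul_mul_assoc, ← Nat.cast_smul_eq_nsmul ℚ, smul_smul,
      mul_inv_cancel₀ (Nat.cast_ne_zero.mpr (by omega) : (k:ℚ) ≠ 0), one_smul]
    rfl
  rw [Finset.sum_congr rfl hterm] at hD
  -- split the top term
  rw [Finset.sum_Icc_succ_top (by omega : 1 ≤ n+1), Nat.sub_self, pS_zero, toDiff_one, mul_one] at hD
  have hIH : ∀ k ∈ Finset.Icc 1 n,
      ((X 0 : MvPolynomial (Fin 2) ℚ) ^ k - X 1 ^ k) * toDiff (pS (n+1-k))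
        = (X 0 - X 1) * X 0 ^ n - (X 0 - X 1) * (X 1 ^ k * X 0 ^ (n - k)) := by
    intro k hk
    simp only [Finset.mem_Icc] at hk
    have h1 : n + 1 - k = (n - k) + 1 := by omega
    rw [h1, ih (n-k) (by omega)]
    rw [show n = k + (n - k) by omega, pow_add]
    have h2 : k + (n-k) - k = n - k := by omega
    rw [h2]
    ring
  rw [Finset.sum_congr rfl hIH, Finset.sum_sub_distrib, Finset.sum_const, Nat.card_Icc] at hD
  set S : MvPolynomial (Fin 2) ℚ := ∑ k ∈ Finset.range (n+1), X 1 ^ k * X 0 ^ (n - k) with hS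
  have hg : (X 0 : MvPolynomial (Fin 2) ℚ) ^ (n+1) - X 1 ^ (n+1) = (X 0 - X 1) * S := by
    rw [hS]; clear hS hD hIH hterm ih
    induction n with
    | zero => simp
    | succ m ihm =>
      rw [Finset.sum_range_succ, Nat.sub_self, pow_zero, mul_one]
      have hstep : ∑ k ∈ Finset.range (m+1), (X 1 : MvPolynomial (Fin 2) ℚ) ^ k * X 0 ^ (m + 1 - k)
          = X 0 * ∑ k ∈ Finset.range (m+1), (X 1 : MvPolynomial (Fin 2) ℚ) ^ k * X 0 ^ (m - k) := by
        rw [Finset.mul_sum]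
        refine Finset.sum_congr rfl fun k hk => ?_
        simp only [Finset.mem_range] at hk
        rw [show m + 1 - k = (m - k) + 1 by omega, pow_succ]
        ring
      rw [mul_add, hstep, ← mul_assoc, mul_comm (X 0 - X 1) (X 0 : MvPolynomial (Fin 2) ℚ),
        mul_assoc, ← ihm]
      ring
  have hsum : ∑ k ∈ Finset.Icc 1 n, (X 0 - X 1) * ((X 1 : MvPolynomial (Fin 2) ℚ) ^ k * X 0 ^ (n - k))
      = (X 0 - X 1) * S - (X 0 - X 1) * X 0 ^ n := by
    have h0 : (X 0 - X 1) * S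
        = ∑ k ∈ Finset.range (n+1), (X 0 - X 1) * ((X 1 : MvPolynomial (Fin 2) ℚ) ^ k * X 0 ^ (n - k)) := by
      rw [hS, Finset.mul_sum]
    have h1 : ∑ k ∈ Finset.range (n+1), (X 0 - X 1) * ((X 1 : MvPolynomial (Fin 2) ℚ) ^ k * X 0 ^ (n - k))
        = (X 0 - X 1) * ((X 1 : MvPolynomial (Fin 2) ℚ) ^ 0 * X 0 ^ (n - 0))
          + ∑ k ∈ Finset.Ico 1 (n+1), (X 0 - X 1) * ((X 1 : MvPolynomial (Fin 2) ℚ) ^ k * X 0 ^ (n - k)) := by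
      rw [Finset.range_eq_Ico]
      exact Finset.sum_eq_sum_Ico_succ_bot (by omega) _
    rw [Finset.Ico_add_one_right_eq_Icc] at h1
    rw [h0, h1]
    simp only [pow_zero, one_mul, Nat.sub_zero]
    ring
  rw [hsum, hg] at hD
  have hfin : (n+1-1) • ((X 0 - X 1) * (X 0 : MvPolynomial (Fin 2) ℚ) ^ n)
      - ((X 0 - X 1) * S - (X 0 - X 1) * X 0 ^ n) + (X 0 - X 1) * S
      = (n+1) • ((X 0 - X 1) * (X 0 : MvPolynomial (Fin 2) ℚ) ^ n) := by
    rw [Nat.add_sub_cancel, succ_nsmul]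
    abel
  rw [hfin] at hD
  exact nsmul_cancel (Nat.succ_ne_zero n) hD

lemma pderiv_finset_prod {ι : Type*} [DecidableEq ι] (i : ℕ) (s : Finset ι)
    (f : ι → MvPolynomial ℕ ℚ) :
    pderiv i (∏ j ∈ s, f j) = ∑ j ∈ s, pderiv i (f j) * ∏ k ∈ s.erase j, f k := by
  induction s using Finset.induction_on with
  | empty => simp
  | @insert a s ha ih =>
    rw [Finset.prod_insert ha, pderiv_mul, ih, Finset.sum_insert ha, Finset.erase_insert ha]
    congr 1
    rw [Finset.mul_sum]
    refine Finset.sum_congr rfl fun j hj => ?_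
    have haj : a ∉ s.erase j := fun h => ha (Finset.mem_of_mem_erase h)
    have hne : j ≠ a := by rintro rfl; exact ha hj
    rw [Finset.erase_insert_of_ne hne.symm, Finset.prod_insert haj]
    ring

lemma pderiv_det {l : ℕ} (i : ℕ) (M : Matrix (Fin l) (Fin l) (MvPolynomial ℕ ℚ)) :
    pderiv i M.det = ∑ a : Fin l, (M.updateRow a (fun b => pderiv i (M a b))).det := by
  classical
  rw [Matrix.det_apply, map_sum]
  have h1 : ∀ σ : Equiv.Perm (Fin l), pderiv (R := ℚ) i (Equiv.Perm.sign σ • ∏ a, M (σ a) a)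
      = ∑ j : Fin l, Equiv.Perm.sign σ •
          (pderiv i (M (σ j) j) * ∏ k ∈ Finset.univ.erase j, M (σ k) k) := by
    intro σ
    rw [Units.smul_def, map_zsmul, pderiv_finset_prod, Finset.smul_sum]
    exact Finset.sum_congr rfl fun j _ => (Units.smul_def _ _).symm
  rw [Finset.sum_congr rfl (fun σ (_ : σ ∈ Finset.univ) => h1 σ)]
  have h2 : ∀ a : Fin l, (M.updateRow a (fun b => pderiv i (M a b))).det
      = ∑ σ : Equiv.Perm (Fin l), Equiv.Perm.sign σ •
          ∏ k : Fin l, (if σ k = a then pderiv i (M a k) else M (σ k) k) := by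
    intro a
    rw [Matrix.det_apply]
    refine Finset.sum_congr rfl fun σ _ => ?_
    congr 1
    exact Finset.prod_congr rfl fun k _ => by rw [Matrix.updateRow_apply]
  rw [Finset.sum_congr rfl (fun a (_ : a ∈ Finset.univ) => h2 a)]
  conv_rhs => rw [Finset.sum_comm]
  refine Finset.sum_congr rfl fun σ _ => ?_
  rw [← Equiv.sum_comp σ (fun a => Equiv.Perm.sign σ •
      ∏ k : Fin l, (if σ k = a then pderiv i (M a k) else M (σ k) k))]
  refine Finset.sum_congr rfl fun j _ => ?_
  congr 1
  rw [← Finset.mul_prod_erase Finset.univ _ (Finset.mem_univ j), if_pos rfl]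
  congr 1
  refine Finset.prod_congr rfl fun k hk => ?_
  rw [if_neg (fun h => (Finset.mem_erase.mp hk).1 (σ.injective h))]

lemma pderiv_pz (m : ℤ) : pderiv 1 (pz m) = pz (m - 1) := by
  unfold pz
  rcases lt_trichotomy m 0 with h | h | h
  · rw [if_neg (by omega), if_neg (by omega), map_zero]
  · subst h
    rw [if_pos le_rfl, if_neg (by omega), Int.toNat_zero, pS_zero]
    exact Derivation.map_one_eq_zero _
  · rw [if_pos (by omega), if_pos (by omega)]
    have ht : m.toNat = (m-1).toNat + 1 := by omega
    rw [ht, pderiv_pS_succ]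

noncomputable def qq (m : ℤ) : MvPolynomial (Fin 2) ℚ := toDiff (pz m)

lemma qq_neg {m : ℤ} (h : m < 0) : qq m = 0 := by
  unfold qq pz
  rw [if_neg (by omega)]
  exact map_zero (aeval _)

lemma qq_zero : qq 0 = 1 := by
  unfold qq pz
  rw [if_pos le_rfl, Int.toNat_zero, pS_zero]
  exact map_one (aeval _)

lemma qq_pos {m : ℤ} (h : 1 ≤ m) : qq m = (X 0 - X 1) * X 0 ^ (m-1).toNat := by
  unfold qq pz
  rw [if_pos (by omega)]
  have ht : m.toNat = (m-1).toNat + 1 := by omega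
  rw [ht]
  exact toDiff_pS_succ _

lemma sum_range_card_le (T : Finset ℕ) : ∑ i ∈ Finset.range T.card, i ≤ ∑ t ∈ T, t := by
  induction T using Finset.induction_on_max with
  | empty => simp
  | insert a T ha ih =>
    have hsub : T ⊆ Finset.range a := fun x hx => Finset.mem_range.mpr (ha x hx)
    have hcard : T.card ≤ a := by
      have := Finset.card_le_card hsub
      simpa [Finset.card_range] using this
    rw [Finset.card_insert_of_notMem (fun h => lt_irrefl a (ha a h)),
      Finset.sum_insert (fun h => lt_irrefl a (ha a h)), Finset.sum_range_succ]
    omega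

lemma range_card_sum_le {ι : Type*} (s : Finset ι) (g : ι → ℕ) (hg : Set.InjOn g s) :
    ∑ i ∈ Finset.range s.card, i ≤ ∑ a ∈ s, g a := by
  have himg : ∑ t ∈ s.image g, t = ∑ a ∈ s, g a :=
    Finset.sum_image (fun x hx y hy h => hg hx hy h)
  rw [← himg, ← Finset.card_image_of_injOn hg]
  exact sum_range_card_le _

lemma sum_nonpos_inj {ι : Type*} (s : Finset ι) (f : ι → ℤ) (hinj : Set.InjOn f s)
    (hnp : ∀ a ∈ s, f a ≤ 0) :
    ∑ a ∈ s, f a ≤ - ∑ i ∈ Finset.range s.card, (i : ℤ) := by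
  have h1 : ∀ a ∈ s, f a = -(((-f a).toNat : ℤ)) := by
    intro a ha
    have := hnp a ha
    omega
  rw [Finset.sum_congr rfl h1, Finset.sum_neg_distrib]
  apply neg_le_neg
  have h2 : Set.InjOn (fun a => (-f a).toNat) s := by
    intro x hx y hy h
    apply hinj hx hy
    have h' : (-f x).toNat = (-f y).toNat := h
    have hx' := hnp x hx; have hy' := hnp y hy
    omega
  have h3 := range_card_sum_le s (fun a => (-f a).toNat) h2
  have h4 := Int.ofNat_le.mpr h3
  push_cast at h4
  exact h4

lemma det_row_smul_eq_zero {l : ℕ} {N : Matrix (Fin l) (Fin l) (MvPolynomial (Fin 2) ℚ)}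
    {a a' : Fin l} (hne : a ≠ a') (c : MvPolynomial (Fin 2) ℚ) (h : N a = c • N a') :
    N.det = 0 := by
  have h1 : N = N.updateRow a (c • N a') := by
    rw [← h]; exact (Matrix.updateRow_eq_self N a).symm
  rw [h1, Matrix.det_updateRow_smul]
  have h2 : (N.updateRow a (N a')).det = 0 := by
    apply Matrix.det_zero_of_row_eq hne
    rw [Matrix.updateRow_self, Matrix.updateRow_ne hne.symm]
  rw [h2, mul_zero]

lemma det_vanish {l : ℕ} (lam : Fin l → ℕ) (hanti : Antitone lam) (hl : 0 < l) (ν : Fin l → ℕ)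
    (hν : (∑ a, (ν a : ℤ)) + ((l : ℤ) - 1)
        < (∑ a : Fin l, (lam a : ℤ)) - (lam ⟨0, hl⟩ : ℤ)) :
    (Matrix.of (fun a b : Fin l =>
      qq ((lam a : ℤ) - (ν a : ℤ) - ((a : ℕ) : ℤ) + ((b : ℕ) : ℤ)))).det = 0 := by
  classical
  set d : Fin l → ℤ := fun a => (lam a : ℤ) - (ν a : ℤ) - ((a : ℕ) : ℤ) with hd
  have hentry : ∀ a b : Fin l, (Matrix.of (fun a b : Fin l =>
      qq ((lam a : ℤ) - (ν a : ℤ) - ((a : ℕ) : ℤ) + ((b : ℕ) : ℤ)))) a b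
      = qq (d a + ((b : ℕ) : ℤ)) := fun a b => rfl
  by_cases hinj : Function.Injective d
  · by_cases h2 : ∃ a a' : Fin l, a ≠ a' ∧ 1 ≤ d a' ∧ d a' ≤ d a
    · obtain ⟨a, a', hne, h1', hle⟩ := h2
      apply det_row_smul_eq_zero hne ((X 0 : MvPolynomial (Fin 2) ℚ) ^ (d a - d a').toNat)
      funext b
      simp only [Pi.smul_apply, smul_eq_mul]
      rw [hentry, hentry, qq_pos (by omega), qq_pos (by omega),
        show (d a + ((b:ℕ):ℤ) - 1).toNat = (d a - d a').toNat + (d a' + ((b:ℕ):ℤ) - 1).toNat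
          by omega, pow_add]
      ring
    · exfalso
      push_neg at h2
      set s : Finset (Fin l) := Finset.univ.filter (fun a => d a ≤ 0) with hs
      have hcard1 : (Finset.univ.filter (fun a : Fin l => ¬ d a ≤ 0)).card ≤ 1 := by
        rw [Finset.card_le_one]
        intro a ha a' ha'
        simp only [Finset.mem_filter, not_le] at ha ha'
        by_contra hne
        rcases le_total (d a) (d a') with h | h
        · have := h2 a' a (Ne.symm hne) (by omega); omega
        · have := h2 a a' hne (by omega); omega
      have hcards : s.card + (Finset.univ.filter (fun a : Fin l => ¬ d a ≤ 0)).card = l := by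
        rw [hs, Finset.card_filter_add_card_filter_not, Finset.card_univ,
          Fintype.card_fin]
      have hsum_s : ∑ a ∈ s, d a ≤ - ∑ i ∈ Finset.range s.card, (i : ℤ) :=
        sum_nonpos_inj s d (hinj.injOn) (fun a ha => (Finset.mem_filter.mp ha).2)
      have hrange_mono : ∑ i ∈ Finset.range (l-1), (i : ℤ) ≤ ∑ i ∈ Finset.range s.card, (i : ℤ) :=
        Finset.sum_le_sum_of_subset_of_nonneg
          (Finset.range_subset_range.mpr (by omega)) (fun i _ _ => by positivity)
      have hlam0 : ∀ a : Fin l, d a ≤ (lam ⟨0, hl⟩ : ℤ) := by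
        intro a
        have h1 : lam a ≤ lam ⟨0, hl⟩ := hanti (Fin.mk_le_of_le_val (Nat.zero_le _))
        have h2 : (lam a : ℤ) ≤ (lam ⟨0, hl⟩ : ℤ) := by exact_mod_cast h1
        show (lam a : ℤ) - (ν a : ℤ) - ((a : ℕ) : ℤ) ≤ (lam ⟨0, hl⟩ : ℤ)
        have hν0 : (0:ℤ) ≤ (ν a : ℤ) := Int.ofNat_nonneg _
        have ha0 : (0:ℤ) ≤ ((a : ℕ) : ℤ) := Int.ofNat_nonneg _
        omega
      have hsum_c : ∑ a ∈ Finset.univ.filter (fun a : Fin l => ¬ d a ≤ 0), d a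
          ≤ (lam ⟨0, hl⟩ : ℤ) := by
        calc ∑ a ∈ Finset.univ.filter (fun a : Fin l => ¬ d a ≤ 0), d a
            ≤ (Finset.univ.filter (fun a : Fin l => ¬ d a ≤ 0)).card • (lam ⟨0, hl⟩ : ℤ) :=
              Finset.sum_le_card_nsmul _ _ _ (fun a _ => hlam0 a)
          _ = ((Finset.univ.filter (fun a : Fin l => ¬ d a ≤ 0)).card : ℤ) * (lam ⟨0, hl⟩ : ℤ) :=
              nsmul_eq_mul _ _
          _ ≤ 1 * (lam ⟨0, hl⟩ : ℤ) := by
              apply mul_le_mul_of_nonneg_right _ (Int.ofNat_nonneg _)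
              exact_mod_cast hcard1
          _ = (lam ⟨0, hl⟩ : ℤ) := one_mul _
      have hsplit : ∑ a ∈ s, d a + ∑ a ∈ Finset.univ.filter (fun a : Fin l => ¬ d a ≤ 0), d a
          = ∑ a : Fin l, d a := Finset.sum_filter_add_sum_filter_not _ _ _
      have htotal : ∑ a : Fin l, d a
          = (∑ a : Fin l, (lam a : ℤ)) - (∑ a, (ν a : ℤ)) - ∑ a : Fin l, ((a : ℕ) : ℤ) := by
        rw [hd, ← Finset.sum_sub_distrib, ← Finset.sum_sub_distrib]
      have hL : ∑ a : Fin l, ((a : ℕ) : ℤ) = ∑ i ∈ Finset.range l, (i : ℤ) :=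
        Fin.sum_univ_eq_sum_range (fun i => (i : ℤ)) l
      have hRange : ∑ i ∈ Finset.range l, (i : ℤ)
          = ∑ i ∈ Finset.range (l-1), (i : ℤ) + ((l : ℤ) - 1) := by
        rw [show l = (l-1)+1 by omega, Finset.sum_range_succ]
        push_cast
        ring
      linarith
  · obtain ⟨a, a', heq, hne⟩ := Function.not_injective_iff.mp hinj
    apply Matrix.det_zero_of_row_eq hne
    funext b
    rw [hentry, hentry, heq]

noncomputable def Mz {l : ℕ} (lam : Fin l → ℕ) (ν : Fin l → ℕ) :
    Matrix (Fin l) (Fin l) (MvPolynomial ℕ ℚ) :=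
  Matrix.of fun a b : Fin l => pz ((lam a : ℤ) - (ν a : ℤ) - ((a : ℕ) : ℤ) + ((b : ℕ) : ℤ))

lemma derivs_replicate (n : ℕ) (f : MvPolynomial ℕ ℚ) :
    derivs (List.replicate n 1) f = (fun g => pderiv (R := ℚ) 1 g)^[n] f := by
  induction n with
  | zero => rfl
  | succ m ih =>
    rw [List.replicate_succ]
    show pderiv 1 (derivs (List.replicate m 1) f) = _
    rw [ih, Function.iterate_succ_apply']

lemma pderiv_det_Mz {l : ℕ} (lam : Fin l → ℕ) (ν : Fin l → ℕ) :
    pderiv (R := ℚ) 1 (Mz lam ν).det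
      = ∑ a : Fin l, (Mz lam (Function.update ν a (ν a + 1))).det := by
  rw [pderiv_det]
  refine Finset.sum_congr rfl fun a _ => ?_
  congr 1
  refine Matrix.ext fun a' b => ?_
  rw [Matrix.updateRow_apply]
  by_cases h : a' = a
  · subst h
    rw [if_pos rfl]
    show pderiv (R := ℚ) 1 (pz ((lam a' : ℤ) - (ν a' : ℤ) - ((a' : ℕ) : ℤ) + ((b : ℕ) : ℤ))) = _
    rw [pderiv_pz]
    show _ = pz ((lam a' : ℤ) - ((Function.update ν a' (ν a' + 1) a' : ℕ) : ℤ)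
      - ((a' : ℕ) : ℤ) + ((b : ℕ) : ℤ))
    rw [Function.update_self]
    congr 1
    push_cast
    ring
  · rw [if_neg h]
    show pz _ = pz _
    rw [Function.update_of_ne h]

lemma toDiff_sum {ι : Type*} (s : Finset ι) (g : ι → MvPolynomial ℕ ℚ) :
    toDiff (∑ a ∈ s, g a) = ∑ a ∈ s, toDiff (g a) :=
  map_sum (aeval _) _ _

lemma main_induction {l : ℕ} (lam : Fin l → ℕ) (hanti : Antitone lam) (hl : 0 < l) :
    ∀ n : ℕ, ∀ ν : Fin l → ℕ,
      ((∑ a, (ν a : ℤ)) + n + ((l : ℤ) - 1)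
        < (∑ a : Fin l, (lam a : ℤ)) - (lam ⟨0, hl⟩ : ℤ)) →
      toDiff ((fun g => pderiv (R := ℚ) 1 g)^[n] (Mz lam ν).det) = 0 := by
  intro n
  induction n with
  | zero =>
    intro ν hν
    simp only [Function.iterate_zero, id_eq]
    have hdet : toDiff (Mz lam ν).det
        = (Matrix.of (fun a b : Fin l =>
            qq ((lam a : ℤ) - (ν a : ℤ) - ((a : ℕ) : ℤ) + ((b : ℕ) : ℤ)))).det := by
      have h := RingHom.map_det
        (((aeval (fun n : ℕ => (n : ℚ)⁻¹ • ((X 0 : MvPolynomial (Fin 2) ℚ) ^ n - X 1 ^ n))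
          : MvPolynomial ℕ ℚ →ₐ[ℚ] MvPolynomial (Fin 2) ℚ))
          : MvPolynomial ℕ ℚ →+* MvPolynomial (Fin 2) ℚ) (Mz lam ν)
      refine h.trans ?_
      congr 1
    rw [hdet]
    exact det_vanish lam hanti hl ν (by push_cast at hν ⊢; linarith)
  | succ m ih =>
    intro ν hν
    rw [Function.iterate_succ_apply, pderiv_det_Mz]
    have hit : ∀ k : ℕ, ∀ (s : Finset (Fin l)) (g : Fin l → MvPolynomial ℕ ℚ),
        (fun g => pderiv (R := ℚ) 1 g)^[k] (∑ a ∈ s, g a)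
          = ∑ a ∈ s, (fun g => pderiv (R := ℚ) 1 g)^[k] (g a) := by
      intro k
      induction k with
      | zero => intro s g; simp
      | succ j ihj =>
        intro s g
        rw [Function.iterate_succ_apply, map_sum, ihj]
        exact Finset.sum_congr rfl fun a _ => (Function.iterate_succ_apply _ j (g a)).symm
    rw [hit, toDiff_sum]
    apply Finset.sum_eq_zero
    intro a _
    apply ih
    have h1 : ∑ x, Function.update ν a (ν a + 1) x = (∑ x, ν x) + 1 := by
      rw [Finset.sum_update_of_mem (Finset.mem_univ a),
        Finset.sum_eq_sum_sdiff_singleton_add (Finset.mem_univ a) ν]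
      omega
    have hupd : ∑ x, ((Function.update ν a (ν a + 1) x : ℕ) : ℤ) = (∑ x, (ν x : ℤ)) + 1 := by
      have h2 := congrArg (fun t : ℕ => (t : ℤ)) h1
      push_cast at h2
      exact h2
    rw [hupd]
    push_cast at hν ⊢
    linarith


/-- Let `λ` be a partition of length `l` and
`N'_{λ,1} = λ_2 + ⋯ + λ_l - (l-1)`. If `n < N'_{λ,1}`, then `∂_1^n s_λ(t)` evaluated at
`t = [x_1] - [x_2]` is identically zero. -/
theorem statement13 (l : ℕ) (lam : Fin l → ℕ)
    (hanti : Antitone lam) (hpos : ∀ i, 1 ≤ lam i)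
    (n : ℕ) (hn : n < (∑ a ∈ Finset.Ico 1 l, pad lam a) - (l - 1)) :
    toDiff (derivs (List.replicate n 1) (schur lam)) = 0 := by
  rcases Nat.eq_zero_or_pos l with hl | hl
  · subst hl
    rw [show Finset.Ico 1 0 = ∅ from Finset.Ico_eq_empty (by omega)] at hn
    simp at hn
  have hschur : schur lam = (Mz lam 0).det := by
    unfold schur Mz
    have h : ∀ a b : Fin l, ((lam a : ℤ) - ((a:ℕ):ℤ) + ((b:ℕ):ℤ))
        = ((lam a : ℤ) - (((0 : Fin l → ℕ) a : ℕ) : ℤ) - ((a:ℕ):ℤ) + ((b:ℕ):ℤ)) := by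
      intro a b; simp
    simp only [h]
  rw [hschur, derivs_replicate]
  apply main_induction lam hanti hl n 0
  -- arithmetic: from hn
  have hpadsum : pad lam 0 + ∑ a ∈ Finset.Ico 1 l, pad lam a = ∑ a : Fin l, lam a := by
    rw [← Finset.sum_eq_sum_Ico_succ_bot hl (pad lam), ← Finset.range_eq_Ico,
      ← Fin.sum_univ_eq_sum_range (pad lam) l]
    refine Finset.sum_congr rfl fun a _ => ?_
    unfold pad
    rw [dif_pos a.isLt]
  have hpad0 : pad lam 0 = lam ⟨0, hl⟩ := by unfold pad; rw [dif_pos hl]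
  have harith : n + (l - 1) < ∑ a ∈ Finset.Ico 1 l, pad lam a := by omega
  have hcast : ((∑ a : Fin l, lam a : ℕ) : ℤ) = ∑ a : Fin l, (lam a : ℤ) := by push_cast; rfl
  simp only [Pi.zero_apply, Nat.cast_zero, Finset.sum_const_zero, zero_add]
  rw [← hpad0]
  omega
end
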